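/- Let n ≥ 1 be odd and let w₁ = Y^n x³ - X^n x²y, w₂ = Y^n x²y - X^n xy², w₃ = Y^n xy² - X^n y³ in V_{3,n}. Then w₁, w₂, w₃ are linearly independent, and the linear map V_{3,5n} → V_{0,4n}^{⊕3}, u ↦ (T^{(3,n)}(u,w₁), T^{(3,n)}(u,w₂), T^{(3,n)}(u,w₃)), is surjective. -/

import Mathlib

open MvPolynomial

/-- Iterated partial derivative `∂^m/∂(X i)^m` on polynomials in four variables. -/
noncomputable def pd (i : Fin 4) (m : ℕ) (f : MvPolynomial (Fin 4) ℂ) :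
    MvPolynomial (Fin 4) ℂ :=
  (fun g => pderiv i g)^[m] f

/-- The `(r,s)`-th bi-transvectant of bi-forms of bidegrees `(a,b)` and `(a',b')`
in the variables `x = X 0`, `y = X 1` and `X = X 2`, `Y = X 3`:
on pure tensors it is `T^{(r)} ⊠ T^{(s)}`, and explicitly
`T^{(r,s)}(F,G) = ((a-r)!/a!)((a'-r)!/a'!)((b-s)!/b!)((b'-s)!/b'!) ·
  Σ_{k,l} (-1)^{k+l} binom(r,k) binom(s,l)
    (∂_x^{r-k}∂_y^k ∂_X^{s-l}∂_Y^l F)(∂_x^k ∂_y^{r-k} ∂_X^l ∂_Y^{s-l} G)`. -/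
noncomputable def biT (a b a' b' r s : ℕ) (F G : MvPolynomial (Fin 4) ℂ) :
    MvPolynomial (Fin 4) ℂ :=
  (((a - r).factorial : ℂ) / (a.factorial : ℂ) *
      (((a' - r).factorial : ℂ) / (a'.factorial : ℂ)) *
      (((b - s).factorial : ℂ) / (b.factorial : ℂ)) *
      (((b' - s).factorial : ℂ) / (b'.factorial : ℂ))) •
    ∑ k ∈ Finset.range (r + 1), ∑ l ∈ Finset.range (s + 1),
      ((-1 : ℂ) ^ (k + l) * (r.choose k : ℂ) * (s.choose l : ℂ)) •
        (pd 0 (r - k) (pd 1 k (pd 2 (s - l) (pd 3 l F))) *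
          pd 0 k (pd 1 (r - k) (pd 2 l (pd 3 (s - l) G))))

/-- The space `V_{a,b}` of bi-forms of bidegree `(a,b)` on `ℙ¹×ℙ¹`, realized as the
span of the monomials `x^i y^{a-i} X^j Y^{b-j}`. -/
noncomputable def Vab (a b : ℕ) : Submodule ℂ (MvPolynomial (Fin 4) ℂ) :=
  Submodule.span ℂ
    {p | ∃ i ≤ a, ∃ j ≤ b, p = X 0 ^ i * X 1 ^ (a - i) * X 2 ^ j * X 3 ^ (b - j)}

noncomputable def mono (a b c d : ℕ) : MvPolynomial (Fin 4) ℂ :=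
  X 0 ^ a * X 1 ^ b * X 2 ^ c * X 3 ^ d

lemma pd_succ (i : Fin 4) (m : ℕ) (f : MvPolynomial (Fin 4) ℂ) :
    pd i (m+1) f = pd i m (pderiv i f) := by
  rw [pd, pd, Function.iterate_succ_apply]

lemma pd_zero_poly (i : Fin 4) (m : ℕ) : pd i m 0 = 0 := by
  induction m with
  | zero => rfl
  | succ m ih => rw [pd_succ]; simpa using ih

lemma pd_smul (i : Fin 4) (m : ℕ) (c : ℂ) (f : MvPolynomial (Fin 4) ℂ) :
    pd i m (c • f) = c • pd i m f := by
  induction m generalizing f with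
  | zero => rfl
  | succ m ih =>
    rw [pd_succ, pd_succ, Derivation.map_smul, ih]

lemma pd_add (i : Fin 4) (m : ℕ) (f g : MvPolynomial (Fin 4) ℂ) :
    pd i m (f + g) = pd i m f + pd i m g := by
  induction m generalizing f g with
  | zero => rfl
  | succ m ih =>
    rw [pd_succ, pd_succ, pd_succ, map_add, ih]

lemma pderiv0_mono (a b c d : ℕ) :
    pderiv 0 (mono a b c d) = (a : ℂ) • mono (a-1) b c d := by
  cases a with
  | zero => simp [mono, pderiv_mul, pderiv_pow, pderiv_X_self, pderiv_X_of_ne]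
  | succ a =>
    simp [mono, pderiv_mul, pderiv_pow, pderiv_X_self, pderiv_X_of_ne, smul_eq_C_mul]
    ring

lemma pderiv1_mono (a b c d : ℕ) :
    pderiv 1 (mono a b c d) = (b : ℂ) • mono a (b-1) c d := by
  cases b with
  | zero => simp [mono, pderiv_mul, pderiv_pow, pderiv_X_self, pderiv_X_of_ne]
  | succ b =>
    simp [mono, pderiv_mul, pderiv_pow, pderiv_X_self, pderiv_X_of_ne, smul_eq_C_mul]
    ring

lemma pderiv2_mono (a b c d : ℕ) :
    pderiv 2 (mono a b c d) = (c : ℂ) • mono a b (c-1) d := by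
  cases c with
  | zero => simp [mono, pderiv_mul, pderiv_pow, pderiv_X_self, pderiv_X_of_ne]
  | succ c =>
    simp [mono, pderiv_mul, pderiv_pow, pderiv_X_self, pderiv_X_of_ne, smul_eq_C_mul]
    ring

lemma pderiv3_mono (a b c d : ℕ) :
    pderiv 3 (mono a b c d) = (d : ℂ) • mono a b c (d-1) := by
  cases d with
  | zero => simp [mono, pderiv_mul, pderiv_pow, pderiv_X_self, pderiv_X_of_ne]
  | succ d =>
    simp [mono, pderiv_mul, pderiv_pow, pderiv_X_self, pderiv_X_of_ne, smul_eq_C_mul]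
    ring

lemma descF_mul_nat (a m : ℕ) : a * (a-1).descFactorial m = a.descFactorial (m+1) := by
  cases a with
  | zero => simp
  | succ a =>
    rw [Nat.succ_sub_one]
    exact (Nat.succ_descFactorial_succ a m).symm

lemma descF_mul (a m : ℕ) :
    ((a * (a-1).descFactorial m : ℕ) : ℂ) = (a.descFactorial (m+1) : ℂ) := by
  rw [descF_mul_nat]

lemma pd0_mono (m a b c d : ℕ) :
    pd 0 m (mono a b c d) = (a.descFactorial m : ℂ) • mono (a-m) b c d := by
  induction m generalizing a with
  | zero => simp [pd]
  | succ m ih =>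
    rw [pd_succ, pderiv0_mono, pd_smul, ih, smul_smul, ← Nat.cast_mul, descF_mul]
    congr 2
    omega

lemma pd1_mono (m a b c d : ℕ) :
    pd 1 m (mono a b c d) = (b.descFactorial m : ℂ) • mono a (b-m) c d := by
  induction m generalizing b with
  | zero => simp [pd]
  | succ m ih =>
    rw [pd_succ, pderiv1_mono, pd_smul, ih, smul_smul, ← Nat.cast_mul, descF_mul]
    congr 2
    omega

lemma pd2_mono (m a b c d : ℕ) :
    pd 2 m (mono a b c d) = (c.descFactorial m : ℂ) • mono a b (c-m) d := by
  induction m generalizing c with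
  | zero => simp [pd]
  | succ m ih =>
    rw [pd_succ, pderiv2_mono, pd_smul, ih, smul_smul, ← Nat.cast_mul, descF_mul]
    congr 2
    omega

lemma pd3_mono (m a b c d : ℕ) :
    pd 3 m (mono a b c d) = (d.descFactorial m : ℂ) • mono a b c (d-m) := by
  induction m generalizing d with
  | zero => simp [pd]
  | succ m ih =>
    rw [pd_succ, pderiv3_mono, pd_smul, ih, smul_smul, ← Nat.cast_mul, descF_mul]
    congr 2
    omega

lemma mono_mul (a b c d a' b' c' d' : ℕ) :
    mono a b c d * mono a' b' c' d' = mono (a+a') (b+b') (c+c') (d+d') := by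
  simp only [mono, pow_add]; ring

lemma biT_add_left (a b a' b' r s : ℕ) (F F' G : MvPolynomial (Fin 4) ℂ) :
    biT a b a' b' r s (F + F') G = biT a b a' b' r s F G + biT a b a' b' r s F' G := by
  simp [biT, pd_add, add_mul, smul_add, Finset.sum_add_distrib]

lemma biT_smul_left (a b a' b' r s : ℕ) (c : ℂ) (F G : MvPolynomial (Fin 4) ℂ) :
    biT a b a' b' r s (c • F) G = c • biT a b a' b' r s F G := by
  simp only [biT, pd_smul, smul_mul_assoc, Finset.smul_sum, smul_comm c]

lemma biT_zero_left (a b a' b' r s : ℕ) (G : MvPolynomial (Fin 4) ℂ) :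
    biT a b a' b' r s 0 G = 0 := by
  simp [biT, pd_zero_poly]

lemma biT_sub_right (a b a' b' r s : ℕ) (F G G' : MvPolynomial (Fin 4) ℂ) :
    biT a b a' b' r s F (G - G') = biT a b a' b' r s F G - biT a b a' b' r s F G' := by
  have hsub : ∀ (i : Fin 4) (m : ℕ) (f g : MvPolynomial (Fin 4) ℂ),
      pd i m (f - g) = pd i m f - pd i m g := by
    intro i m f g
    induction m generalizing f g with
    | zero => rfl
    | succ m ih => rw [pd_succ, pd_succ, pd_succ, map_sub, ih]
  simp [biT, hsub, mul_sub, smul_sub, Finset.sum_sub_distrib]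

lemma smul_mul_smul' (x y : ℂ) (A B : MvPolynomial (Fin 4) ℂ) :
    (x • A) * (y • B) = (x * y) • (A * B) := by
  rw [smul_mul_assoc, mul_smul_comm, smul_smul]

lemma descF_zero {p q : ℕ} (h : p < q) : ((p.descFactorial q : ℕ) : ℂ) = 0 := by
  simp [Nat.descFactorial_eq_zero_iff_lt.mpr h]

lemma pdG_zero (n c m : ℕ) (k l : ℕ) (hk : k ≤ 3) (hl : l ≤ n) (hc : c ≤ 3) (hm : m ≤ n)
    (h : k ≠ c ∨ l ≠ m) :
    pd 0 k (pd 1 (3 - k) (pd 2 l (pd 3 (n - l) (mono c (3-c) m (n-m))))) = 0 := by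
  rcases h with h | h
  · rcases Nat.lt_or_ge c k with h' | h'
    · have h0 : ((c.descFactorial k : ℕ) : ℂ) = 0 := descF_zero h'
      simp [pd0_mono, pd1_mono, pd2_mono, pd3_mono, pd_smul, pd_zero_poly, h0]
    · have h' : (3 - c) < (3 - k) := by omega
      have h0 : (((3-c).descFactorial (3-k) : ℕ) : ℂ) = 0 := descF_zero h'
      simp [pd0_mono, pd1_mono, pd2_mono, pd3_mono, pd_smul, pd_zero_poly, h0]
  · rcases Nat.lt_or_ge m l with h' | h'
    · have h0 : ((m.descFactorial l : ℕ) : ℂ) = 0 := descF_zero h'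
      simp [pd0_mono, pd1_mono, pd2_mono, pd3_mono, pd_smul, pd_zero_poly, h0]
    · have h' : (n - m) < (n - l) := by omega
      have h0 : (((n-m).descFactorial (n-l) : ℕ) : ℂ) = 0 := descF_zero h'
      simp [pd0_mono, pd1_mono, pd2_mono, pd3_mono, pd_smul, pd_zero_poly, h0]

set_option maxHeartbeats 1000000 in
lemma biT_mono_master (n J a c m : ℕ) (hc : c ≤ 3) (hm : m ≤ n) :
    biT 3 (5*n) 3 n 3 n (mono a (3-a) J (5*n-J)) (mono c (3-c) m (n-m)) =
      (((4*n).factorial : ℂ) / (((5*n).factorial : ℂ) * (n.factorial : ℂ) * 36) *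
        ((-1)^(c+m) * (Nat.choose 3 c : ℂ) * (Nat.choose n m : ℂ) *
         (a.descFactorial (3-c) : ℂ) * ((3-a).descFactorial c : ℂ) *
         (J.descFactorial (n-m) : ℂ) * ((5*n-J).descFactorial m : ℂ) *
         ((c.factorial : ℂ) * ((3-c).factorial : ℂ) * (m.factorial : ℂ) * ((n-m).factorial : ℂ)))) •
      mono (a-(3-c)) ((3-a)-c) (J-(n-m)) (5*n-J-m) := by
  rw [biT]
  rw [Finset.sum_eq_single_of_mem c (Finset.mem_range.mpr (by omega))
    (fun k hk hkc => Finset.sum_eq_zero (fun l hl => by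
      rw [pdG_zero n c m k l (by simpa using Nat.lt_succ_iff.mp (Finset.mem_range.mp hk))
        (Nat.lt_succ_iff.mp (Finset.mem_range.mp hl)) hc hm (Or.inl hkc)]
      simp))]
  rw [Finset.sum_eq_single_of_mem m (Finset.mem_range.mpr (by omega))
    (fun l hl hlm => by
      rw [pdG_zero n c m c l hc (Nat.lt_succ_iff.mp (Finset.mem_range.mp hl)) hc hm
        (Or.inr hlm)]
      simp)]
  simp only [pd0_mono, pd1_mono, pd2_mono, pd3_mono, pd_smul, smul_smul]
  rw [smul_mul_smul', mono_mul]
  simp only [Nat.sub_self, Nat.descFactorial_self, Nat.add_zero, add_zero]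
  rw [smul_smul]
  congr 1
  have h4 : 5*n - n = 4*n := by omega
  rw [h4]
  have h30 : ((Nat.factorial (3-3) : ℕ) : ℂ) = 1 := by norm_num
  have h3 : ((Nat.factorial 3 : ℕ) : ℂ) = 6 := by norm_num [Nat.factorial]
  rw [h30, h3]
  have hne1 : ((5*n).factorial : ℂ) ≠ 0 := Nat.cast_ne_zero.mpr (Nat.factorial_ne_zero _)
  have hne2 : ((n).factorial : ℂ) ≠ 0 := Nat.cast_ne_zero.mpr (Nat.factorial_ne_zero _)
  field_simp
  ring

noncomputable def DD (n : ℕ) : ℂ := ((4*n).factorial : ℂ) / ((5*n).factorial : ℂ)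

noncomputable def bet (a : ℕ) : ℂ :=
  (-1)^(3-a) * (Nat.choose 3 (3-a) : ℂ) * ((a.factorial : ℂ) * ((3-a).factorial : ℂ))^2 / 36

lemma DD_ne (n : ℕ) : DD n ≠ 0 :=
  div_ne_zero (Nat.cast_ne_zero.mpr (Nat.factorial_ne_zero _))
    (Nat.cast_ne_zero.mpr (Nat.factorial_ne_zero _))

lemma bet0_eq : bet 0 = -1 := by norm_num [bet, Nat.factorial]
lemma bet1_eq : bet 1 = 1/3 := by norm_num [bet, Nat.factorial]
lemma bet2_eq : bet 2 = -(1/3) := by norm_num [bet, Nat.factorial]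

lemma bet0_ne : bet 0 ≠ 0 := by rw [bet0_eq]; norm_num
lemma bet1_ne : bet 1 ≠ 0 := by rw [bet1_eq]; norm_num
lemma bet2_ne : bet 2 ≠ 0 := by rw [bet2_eq]; norm_num

lemma descF_ne {p q : ℕ} (h : q ≤ p) : ((p.descFactorial q : ℕ) : ℂ) ≠ 0 :=
  Nat.cast_ne_zero.mpr
    (fun h0 => absurd (Nat.descFactorial_eq_zero_iff_lt.mp h0) (not_lt.mpr h))

lemma biT_Y (n J a : ℕ) (ha : a ≤ 3) :
    biT 3 (5*n) 3 n 3 n (mono a (3-a) J (5*n-J)) (mono (3-a) a 0 n) =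
      (DD n * bet a * ((J.descFactorial n : ℕ) : ℂ)) • mono 0 0 (J-n) (5*n-J) := by
  have h := biT_mono_master n J a (3-a) 0 (by omega) (by omega)
  rw [show 3-(3-a) = a from by omega] at h
  simp only [Nat.sub_zero, Nat.sub_self] at h
  rw [h]
  congr 1
  rw [Nat.descFactorial_self, Nat.descFactorial_self, Nat.descFactorial_zero]
  simp only [DD, bet, Nat.choose_zero_right, Nat.factorial_zero, pow_zero, add_zero]
  have hne1 : ((5*n).factorial : ℂ) ≠ 0 := Nat.cast_ne_zero.mpr (Nat.factorial_ne_zero _)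
  have hne2 : ((n).factorial : ℂ) ≠ 0 := Nat.cast_ne_zero.mpr (Nat.factorial_ne_zero _)
  push_cast
  field_simp

lemma biT_Xn (n J a : ℕ) (ha : a ≤ 3) :
    biT 3 (5*n) 3 n 3 n (mono a (3-a) J (5*n-J)) (mono (3-a) a n 0) =
      (DD n * bet a * (-1)^n * (((5*n-J).descFactorial n : ℕ) : ℂ)) •
        mono 0 0 J (5*n-J-n) := by
  have h := biT_mono_master n J a (3-a) n (by omega) le_rfl
  rw [show 3-(3-a) = a from by omega] at h
  simp only [Nat.sub_self, Nat.sub_zero] at h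
  rw [h]
  congr 1
  rw [Nat.descFactorial_self, Nat.descFactorial_self, Nat.descFactorial_zero]
  simp only [DD, bet, Nat.choose_self, Nat.factorial_zero]
  have hne1 : ((5*n).factorial : ℂ) ≠ 0 := Nat.cast_ne_zero.mpr (Nat.factorial_ne_zero _)
  have hne2 : ((n).factorial : ℂ) ≠ 0 := Nat.cast_ne_zero.mpr (Nat.factorial_ne_zero _)
  push_cast
  field_simp
  ring

lemma biT_off (n J a c m : ℕ) (ha : a ≤ 3) (hc : c ≤ 3) (hm : m ≤ n) (h : c ≠ 3-a) :
    biT 3 (5*n) 3 n 3 n (mono a (3-a) J (5*n-J)) (mono c (3-c) m (n-m)) = 0 := by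
  rw [biT_mono_master n J a c m hc hm]
  rcases Nat.lt_or_ge c (3-a) with h' | h'
  · have h2 : a < 3-c := by omega
    rw [show ((a.descFactorial (3-c) : ℕ) : ℂ) = 0 from descF_zero h2]
    simp
  · have h2 : 3-a < c := by omega
    rw [show (((3-a).descFactorial c : ℕ) : ℂ) = 0 from descF_zero h2]
    simp

noncomputable def w1 (n : ℕ) : MvPolynomial (Fin 4) ℂ := mono 3 0 0 n - mono 2 1 n 0
noncomputable def w2 (n : ℕ) : MvPolynomial (Fin 4) ℂ := mono 2 1 0 n - mono 1 2 n 0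
noncomputable def w3 (n : ℕ) : MvPolynomial (Fin 4) ℂ := mono 1 2 0 n - mono 0 3 n 0

-- biT of u-monomials (a = 0,1,2) against the w's
lemma biT_u0_w1 (n J : ℕ) :
    biT 3 (5*n) 3 n 3 n (mono 0 3 J (5*n-J)) (w1 n) =
      (DD n * bet 0 * ((J.descFactorial n : ℕ) : ℂ)) • mono 0 0 (J-n) (5*n-J) := by
  rw [w1, biT_sub_right]
  have h1 := biT_Y n J 0 (by norm_num)
  have h2 := biT_off n J 0 2 n (by norm_num) (by norm_num) le_rfl (by norm_num)
  norm_num [Nat.sub_self] at h1 h2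
  rw [h1, h2, sub_zero]

lemma biT_u0_w2 (n J : ℕ) :
    biT 3 (5*n) 3 n 3 n (mono 0 3 J (5*n-J)) (w2 n) = 0 := by
  rw [w2, biT_sub_right]
  have h1 := biT_off n J 0 2 0 (by norm_num) (by norm_num) (by omega) (by norm_num)
  have h2 := biT_off n J 0 1 n (by norm_num) (by norm_num) le_rfl (by norm_num)
  norm_num [Nat.sub_self] at h1 h2
  rw [h1, h2, sub_zero]

lemma biT_u0_w3 (n J : ℕ) :
    biT 3 (5*n) 3 n 3 n (mono 0 3 J (5*n-J)) (w3 n) = 0 := by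
  rw [w3, biT_sub_right]
  have h1 := biT_off n J 0 1 0 (by norm_num) (by norm_num) (by omega) (by norm_num)
  have h2 := biT_off n J 0 0 n (by norm_num) (by norm_num) le_rfl (by norm_num)
  norm_num [Nat.sub_self] at h1 h2
  rw [h1, h2, sub_zero]

lemma biT_u1_w1 (n J : ℕ) :
    biT 3 (5*n) 3 n 3 n (mono 1 2 J (5*n-J)) (w1 n) =
      -((DD n * bet 1 * (-1)^n * (((5*n-J).descFactorial n : ℕ) : ℂ)) •
        mono 0 0 J (5*n-J-n)) := by
  rw [w1, biT_sub_right]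
  have h1 := biT_off n J 1 3 0 (by norm_num) (by norm_num) (by omega) (by norm_num)
  have h2 := biT_Xn n J 1 (by norm_num)
  norm_num [Nat.sub_self] at h1 h2
  rw [h1, h2, zero_sub]

lemma biT_u1_w2 (n J : ℕ) :
    biT 3 (5*n) 3 n 3 n (mono 1 2 J (5*n-J)) (w2 n) =
      (DD n * bet 1 * ((J.descFactorial n : ℕ) : ℂ)) • mono 0 0 (J-n) (5*n-J) := by
  rw [w2, biT_sub_right]
  have h1 := biT_Y n J 1 (by norm_num)
  have h2 := biT_off n J 1 1 n (by norm_num) (by norm_num) le_rfl (by norm_num)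
  norm_num [Nat.sub_self] at h1 h2
  rw [h1, h2, sub_zero]

lemma biT_u1_w3 (n J : ℕ) :
    biT 3 (5*n) 3 n 3 n (mono 1 2 J (5*n-J)) (w3 n) = 0 := by
  rw [w3, biT_sub_right]
  have h1 := biT_off n J 1 1 0 (by norm_num) (by norm_num) (by omega) (by norm_num)
  have h2 := biT_off n J 1 0 n (by norm_num) (by norm_num) le_rfl (by norm_num)
  norm_num [Nat.sub_self] at h1 h2
  rw [h1, h2, sub_zero]

lemma biT_u2_w1 (n J : ℕ) :
    biT 3 (5*n) 3 n 3 n (mono 2 1 J (5*n-J)) (w1 n) = 0 := by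
  rw [w1, biT_sub_right]
  have h1 := biT_off n J 2 3 0 (by norm_num) (by norm_num) (by omega) (by norm_num)
  have h2 := biT_off n J 2 2 n (by norm_num) (by norm_num) le_rfl (by norm_num)
  norm_num [Nat.sub_self] at h1 h2
  rw [h1, h2, sub_zero]

lemma biT_u2_w2 (n J : ℕ) :
    biT 3 (5*n) 3 n 3 n (mono 2 1 J (5*n-J)) (w2 n) =
      -((DD n * bet 2 * (-1)^n * (((5*n-J).descFactorial n : ℕ) : ℂ)) •
        mono 0 0 J (5*n-J-n)) := by
  rw [w2, biT_sub_right]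
  have h1 := biT_off n J 2 2 0 (by norm_num) (by norm_num) (by omega) (by norm_num)
  have h2 := biT_Xn n J 2 (by norm_num)
  norm_num [Nat.sub_self] at h1 h2
  rw [h1, h2, zero_sub]

lemma biT_u2_w3 (n J : ℕ) :
    biT 3 (5*n) 3 n 3 n (mono 2 1 J (5*n-J)) (w3 n) =
      (DD n * bet 2 * ((J.descFactorial n : ℕ) : ℂ)) • mono 0 0 (J-n) (5*n-J) := by
  rw [w3, biT_sub_right]
  have h1 := biT_Y n J 2 (by norm_num)
  have h2 := biT_off n J 2 0 n (by norm_num) (by norm_num) le_rfl (by norm_num)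
  norm_num [Nat.sub_self] at h1 h2
  rw [h1, h2, sub_zero]

lemma mono_mem_Vab {a b : ℕ} (i j : ℕ) (hi : i ≤ a) (hj : j ≤ b) :
    mono i (a-i) j (b-j) ∈ Vab a b :=
  Submodule.subset_span ⟨i, hi, j, hj, by rw [mono]⟩

lemma claimA (n j : ℕ) (hj : j ≤ 4*n) :
    ∃ u ∈ Vab 3 (5*n),
      biT 3 (5*n) 3 n 3 n u (w1 n) = mono 0 0 j (4*n-j) ∧
      biT 3 (5*n) 3 n 3 n u (w2 n) = 0 ∧
      biT 3 (5*n) 3 n 3 n u (w3 n) = 0 := by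
  refine ⟨(DD n * bet 0 * (((j+n).descFactorial n : ℕ) : ℂ))⁻¹ • mono 0 3 (j+n) (5*n-(j+n)),
    Submodule.smul_mem _ _ (mono_mem_Vab 0 (j+n) (by omega) (by omega)), ?_, ?_, ?_⟩
  · rw [biT_smul_left, biT_u0_w1, smul_smul,
      inv_mul_cancel₀ (by
        exact mul_ne_zero (mul_ne_zero (DD_ne n) bet0_ne) (descF_ne (by omega))),
      one_smul, show j+n-n = j from by omega, show 5*n-(j+n) = 4*n-j from by omega]
  · rw [biT_smul_left, biT_u0_w2, smul_zero]
  · rw [biT_smul_left, biT_u0_w3, smul_zero]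

lemma claimB (n j : ℕ) (hj : j ≤ 4*n) :
    ∃ u ∈ Vab 3 (5*n),
      biT 3 (5*n) 3 n 3 n u (w1 n) = 0 ∧
      biT 3 (5*n) 3 n 3 n u (w2 n) = mono 0 0 j (4*n-j) ∧
      biT 3 (5*n) 3 n 3 n u (w3 n) = 0 := by
  set s : ℂ := (DD n * bet 1 * (((j+n).descFactorial n : ℕ) : ℂ))⁻¹ with hs
  set s' : ℂ := s * bet 1 * (-1)^n * (((4*n-j).descFactorial n : ℕ) : ℂ) *
      (bet 0 * (((j+2*n).descFactorial n : ℕ) : ℂ))⁻¹ with hs'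
  have hsne : DD n * bet 1 * (((j+n).descFactorial n : ℕ) : ℂ) ≠ 0 :=
    mul_ne_zero (mul_ne_zero (DD_ne n) bet1_ne) (descF_ne (by omega))
  refine ⟨s • mono 1 2 (j+n) (5*n-(j+n)) + s' • mono 0 3 (j+2*n) (5*n-(j+2*n)),
    Submodule.add_mem _
      (Submodule.smul_mem _ _ (mono_mem_Vab 1 (j+n) (by omega) (by omega))) ?_,
    ?_, ?_, ?_⟩
  · by_cases hj3 : j ≤ 3*n
    · exact Submodule.smul_mem _ _ (mono_mem_Vab 0 (j+2*n) (by omega) (by omega))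
    · have hz : ((4*n-j).descFactorial n : ℕ) = 0 :=
        Nat.descFactorial_eq_zero_iff_lt.mpr (by omega)
      have : s' = 0 := by rw [hs', hz]; simp
      rw [this, zero_smul]
      exact Submodule.zero_mem _
  · rw [biT_add_left, biT_smul_left, biT_smul_left, biT_u1_w1, biT_u0_w1,
      show 5*n-(j+n) = 4*n-j from by omega,
      show 4*n-j-n = 3*n-j from by omega,
      show j+2*n-n = j+n from by omega,
      show 5*n-(j+2*n) = 3*n-j from by omega]
    rw [smul_neg, smul_smul, smul_smul, ← neg_smul, ← add_smul]
    convert zero_smul ℂ (mono 0 0 (j+n) (3*n-j))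
    have hb0 : bet 0 ≠ 0 := bet0_ne
    have hd2 : (((j+2*n).descFactorial n : ℕ) : ℂ) ≠ 0 := descF_ne (by omega)
    rw [hs']
    field_simp
    ring
  · rw [biT_add_left, biT_smul_left, biT_smul_left, biT_u1_w2, biT_u0_w2, smul_zero,
      add_zero, smul_smul, hs, inv_mul_cancel₀ hsne, one_smul,
      show j+n-n = j from by omega, show 5*n-(j+n) = 4*n-j from by omega]
  · rw [biT_add_left, biT_smul_left, biT_smul_left, biT_u1_w3, biT_u0_w3, smul_zero,
      smul_zero, add_zero]

lemma claimC (n j : ℕ) (hj : j ≤ 4*n) :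
    ∃ u ∈ Vab 3 (5*n),
      biT 3 (5*n) 3 n 3 n u (w1 n) = 0 ∧
      biT 3 (5*n) 3 n 3 n u (w2 n) = 0 ∧
      biT 3 (5*n) 3 n 3 n u (w3 n) = mono 0 0 j (4*n-j) := by
  set t2 : ℂ := (DD n * bet 2 * (((j+n).descFactorial n : ℕ) : ℂ))⁻¹ with ht2
  set t1 : ℂ := t2 * bet 2 * (-1)^n * (((4*n-j).descFactorial n : ℕ) : ℂ) *
      (bet 1 * (((j+2*n).descFactorial n : ℕ) : ℂ))⁻¹ with ht1
  set t0 : ℂ := t1 * bet 1 * (-1)^n * (((3*n-j).descFactorial n : ℕ) : ℂ) *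
      (bet 0 * (((j+3*n).descFactorial n : ℕ) : ℂ))⁻¹ with ht0
  have ht2ne : DD n * bet 2 * (((j+n).descFactorial n : ℕ) : ℂ) ≠ 0 :=
    mul_ne_zero (mul_ne_zero (DD_ne n) bet2_ne) (descF_ne (by omega))
  refine ⟨t2 • mono 2 1 (j+n) (5*n-(j+n)) + t1 • mono 1 2 (j+2*n) (5*n-(j+2*n)) +
      t0 • mono 0 3 (j+3*n) (5*n-(j+3*n)),
    Submodule.add_mem _ (Submodule.add_mem _
      (Submodule.smul_mem _ _ (mono_mem_Vab 2 (j+n) (by omega) (by omega))) ?_) ?_,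
    ?_, ?_, ?_⟩
  · by_cases hj3 : j ≤ 3*n
    · exact Submodule.smul_mem _ _ (mono_mem_Vab 1 (j+2*n) (by omega) (by omega))
    · have hz : ((4*n-j).descFactorial n : ℕ) = 0 :=
        Nat.descFactorial_eq_zero_iff_lt.mpr (by omega)
      have : t1 = 0 := by rw [ht1, hz]; simp
      rw [this, zero_smul]; exact Submodule.zero_mem _
  · by_cases hj2 : j ≤ 2*n
    · exact Submodule.smul_mem _ _ (mono_mem_Vab 0 (j+3*n) (by omega) (by omega))
    · have hz : ((3*n-j).descFactorial n : ℕ) = 0 :=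
        Nat.descFactorial_eq_zero_iff_lt.mpr (by omega)
      have : t0 = 0 := by rw [ht0, hz]; simp
      rw [this, zero_smul]; exact Submodule.zero_mem _
  · -- T1 = 0
    rw [biT_add_left, biT_add_left, biT_smul_left, biT_smul_left, biT_smul_left,
      biT_u2_w1, biT_u1_w1, biT_u0_w1, smul_zero, zero_add,
      show 5*n-(j+2*n) = 3*n-j from by omega,
      show 3*n-j-n = 2*n-j from by omega,
      show j+3*n-n = j+2*n from by omega,
      show 5*n-(j+3*n) = 2*n-j from by omega]
    rw [smul_neg, smul_smul, smul_smul, ← neg_smul, ← add_smul]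
    convert zero_smul ℂ (mono 0 0 (j+2*n) (2*n-j))
    have hb0 : bet 0 ≠ 0 := bet0_ne
    have hd3 : (((j+3*n).descFactorial n : ℕ) : ℂ) ≠ 0 := descF_ne (by omega)
    rw [ht0]
    field_simp
    ring
  · -- T2 = 0
    rw [biT_add_left, biT_add_left, biT_smul_left, biT_smul_left, biT_smul_left,
      biT_u2_w2, biT_u1_w2, biT_u0_w2, smul_zero, add_zero,
      show 5*n-(j+n) = 4*n-j from by omega,
      show 4*n-j-n = 3*n-j from by omega,
      show j+2*n-n = j+n from by omega,
      show 5*n-(j+2*n) = 3*n-j from by omega]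
    rw [smul_neg, smul_smul, smul_smul, ← neg_smul, ← add_smul]
    convert zero_smul ℂ (mono 0 0 (j+n) (3*n-j))
    have hb1 : bet 1 ≠ 0 := bet1_ne
    have hd2 : (((j+2*n).descFactorial n : ℕ) : ℂ) ≠ 0 := descF_ne (by omega)
    rw [ht1]
    field_simp
    ring
  · -- T3 = mono
    rw [biT_add_left, biT_add_left, biT_smul_left, biT_smul_left, biT_smul_left,
      biT_u2_w3, biT_u1_w3, biT_u0_w3, smul_zero, smul_zero, add_zero, add_zero,
      smul_smul, ht2, inv_mul_cancel₀ ht2ne, one_smul,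
      show j+n-n = j from by omega, show 5*n-(j+n) = 4*n-j from by omega]

lemma achieve (n : ℕ)
    (hgen : ∀ j ≤ 4*n, ∃ u ∈ Vab 3 (5*n),
      biT 3 (5*n) 3 n 3 n u (w1 n) = mono 0 0 j (4*n-j) ∧
      biT 3 (5*n) 3 n 3 n u (w2 n) = 0 ∧
      biT 3 (5*n) 3 n 3 n u (w3 n) = 0) :
    ∀ v ∈ Vab 0 (4*n), ∃ u ∈ Vab 3 (5*n),
      biT 3 (5*n) 3 n 3 n u (w1 n) = v ∧
      biT 3 (5*n) 3 n 3 n u (w2 n) = 0 ∧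
      biT 3 (5*n) 3 n 3 n u (w3 n) = 0 := by
  intro v hv
  induction hv using Submodule.span_induction with
  | mem p hp =>
    obtain ⟨i, hi, j, hj, rfl⟩ := hp
    have hi0 : i = 0 := by omega
    subst hi0
    obtain ⟨u, hu, h1, h2, h3⟩ := hgen j hj
    exact ⟨u, hu, by rw [h1]; simp [mono], h2, h3⟩
  | zero => exact ⟨0, Submodule.zero_mem _, by rw [biT_zero_left], by rw [biT_zero_left],
      by rw [biT_zero_left]⟩
  | add x y hx hy ihx ihy =>
    obtain ⟨u, hu, a1, a2, a3⟩ := ihx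
    obtain ⟨u', hu', b1, b2, b3⟩ := ihy
    exact ⟨u + u', Submodule.add_mem _ hu hu',
      by rw [biT_add_left, a1, b1],
      by rw [biT_add_left, a2, b2, add_zero],
      by rw [biT_add_left, a3, b3, add_zero]⟩
  | smul c x hx ihx =>
    obtain ⟨u, hu, a1, a2, a3⟩ := ihx
    exact ⟨c • u, Submodule.smul_mem _ _ hu,
      by rw [biT_smul_left, a1],
      by rw [biT_smul_left, a2, smul_zero],
      by rw [biT_smul_left, a3, smul_zero]⟩

lemma achieve2 (n : ℕ)
    (hgen : ∀ j ≤ 4*n, ∃ u ∈ Vab 3 (5*n),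
      biT 3 (5*n) 3 n 3 n u (w1 n) = 0 ∧
      biT 3 (5*n) 3 n 3 n u (w2 n) = mono 0 0 j (4*n-j) ∧
      biT 3 (5*n) 3 n 3 n u (w3 n) = 0) :
    ∀ v ∈ Vab 0 (4*n), ∃ u ∈ Vab 3 (5*n),
      biT 3 (5*n) 3 n 3 n u (w1 n) = 0 ∧
      biT 3 (5*n) 3 n 3 n u (w2 n) = v ∧
      biT 3 (5*n) 3 n 3 n u (w3 n) = 0 := by
  intro v hv
  induction hv using Submodule.span_induction with
  | mem p hp =>
    obtain ⟨i, hi, j, hj, rfl⟩ := hp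
    have hi0 : i = 0 := by omega
    subst hi0
    obtain ⟨u, hu, h1, h2, h3⟩ := hgen j hj
    exact ⟨u, hu, h1, by rw [h2]; simp [mono], h3⟩
  | zero => exact ⟨0, Submodule.zero_mem _, by rw [biT_zero_left], by rw [biT_zero_left],
      by rw [biT_zero_left]⟩
  | add x y hx hy ihx ihy =>
    obtain ⟨u, hu, a1, a2, a3⟩ := ihx
    obtain ⟨u', hu', b1, b2, b3⟩ := ihy
    exact ⟨u + u', Submodule.add_mem _ hu hu',
      by rw [biT_add_left, a1, b1, add_zero],
      by rw [biT_add_left, a2, b2],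
      by rw [biT_add_left, a3, b3, add_zero]⟩
  | smul c x hx ihx =>
    obtain ⟨u, hu, a1, a2, a3⟩ := ihx
    exact ⟨c • u, Submodule.smul_mem _ _ hu,
      by rw [biT_smul_left, a1, smul_zero],
      by rw [biT_smul_left, a2],
      by rw [biT_smul_left, a3, smul_zero]⟩

lemma achieve3 (n : ℕ)
    (hgen : ∀ j ≤ 4*n, ∃ u ∈ Vab 3 (5*n),
      biT 3 (5*n) 3 n 3 n u (w1 n) = 0 ∧
      biT 3 (5*n) 3 n 3 n u (w2 n) = 0 ∧
      biT 3 (5*n) 3 n 3 n u (w3 n) = mono 0 0 j (4*n-j)) :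
    ∀ v ∈ Vab 0 (4*n), ∃ u ∈ Vab 3 (5*n),
      biT 3 (5*n) 3 n 3 n u (w1 n) = 0 ∧
      biT 3 (5*n) 3 n 3 n u (w2 n) = 0 ∧
      biT 3 (5*n) 3 n 3 n u (w3 n) = v := by
  intro v hv
  induction hv using Submodule.span_induction with
  | mem p hp =>
    obtain ⟨i, hi, j, hj, rfl⟩ := hp
    have hi0 : i = 0 := by omega
    subst hi0
    obtain ⟨u, hu, h1, h2, h3⟩ := hgen j hj
    exact ⟨u, hu, h1, h2, by rw [h3]; simp [mono]⟩
  | zero => exact ⟨0, Submodule.zero_mem _, by rw [biT_zero_left], by rw [biT_zero_left],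
      by rw [biT_zero_left]⟩
  | add x y hx hy ihx ihy =>
    obtain ⟨u, hu, a1, a2, a3⟩ := ihx
    obtain ⟨u', hu', b1, b2, b3⟩ := ihy
    exact ⟨u + u', Submodule.add_mem _ hu hu',
      by rw [biT_add_left, a1, b1, add_zero],
      by rw [biT_add_left, a2, b2, add_zero],
      by rw [biT_add_left, a3, b3]⟩
  | smul c x hx ihx =>
    obtain ⟨u, hu, a1, a2, a3⟩ := ihx
    exact ⟨c • u, Submodule.smul_mem _ _ hu,
      by rw [biT_smul_left, a1, smul_zero],
      by rw [biT_smul_left, a2, smul_zero],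
      by rw [biT_smul_left, a3]⟩

/-- §4.1, case `b ≡ 0 (mod 5)`: for `n` odd, the vectors
`w₁ = Yⁿx³ − Xⁿx²y`, `w₂ = Yⁿx²y − Xⁿxy²`, `w₃ = Yⁿxy² − Xⁿy³` in `V_{3,n}`
are linearly independent, and the map
`V_{3,5n} → V_{0,4n}^{⊕3}`, `u ↦ (T^{(3,n)}(u,w₁), T^{(3,n)}(u,w₂), T^{(3,n)}(u,w₃))`,
is surjective. -/
theorem case_b0_Tw_surjective (n : ℕ) (hn : Odd n) :
    LinearIndependent ℂ
      (![X 3 ^ n * X 0 ^ 3 - X 2 ^ n * (X 0 ^ 2 * X 1),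
        X 3 ^ n * (X 0 ^ 2 * X 1) - X 2 ^ n * (X 0 * X 1 ^ 2),
        X 3 ^ n * (X 0 * X 1 ^ 2) - X 2 ^ n * X 1 ^ 3] : Fin 3 → MvPolynomial (Fin 4) ℂ) ∧
    ∀ u₁ ∈ Vab 0 (4 * n), ∀ u₂ ∈ Vab 0 (4 * n), ∀ u₃ ∈ Vab 0 (4 * n),
      ∃ u ∈ Vab 3 (5 * n),
        biT 3 (5 * n) 3 n 3 n u
            (X 3 ^ n * X 0 ^ 3 - X 2 ^ n * (X 0 ^ 2 * X 1)) = u₁ ∧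
        biT 3 (5 * n) 3 n 3 n u
            (X 3 ^ n * (X 0 ^ 2 * X 1) - X 2 ^ n * (X 0 * X 1 ^ 2)) = u₂ ∧
        biT 3 (5 * n) 3 n 3 n u
            (X 3 ^ n * (X 0 * X 1 ^ 2) - X 2 ^ n * X 1 ^ 3) = u₃ := by
  have hn1 : 1 ≤ n := hn.pos
  have hw1 : (X 3 ^ n * X 0 ^ 3 - X 2 ^ n * (X 0 ^ 2 * X 1) : MvPolynomial (Fin 4) ℂ)
      = w1 n := by
    simp only [w1, mono]; ring
  have hw2 : (X 3 ^ n * (X 0 ^ 2 * X 1) - X 2 ^ n * (X 0 * X 1 ^ 2) : MvPolynomial (Fin 4) ℂ)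
      = w2 n := by
    simp only [w2, mono]; ring
  have hw3 : (X 3 ^ n * (X 0 * X 1 ^ 2) - X 2 ^ n * X 1 ^ 3 : MvPolynomial (Fin 4) ℂ)
      = w3 n := by
    simp only [w3, mono]; ring
  constructor
  · -- linear independence via evaluation at three points
    set φ : MvPolynomial (Fin 4) ℂ →ₗ[ℂ] (Fin 3 → ℂ) :=
      { toFun := fun p => ![eval ![1,0,1,2] p, eval ![0,1,1,2] p, eval ![1,1,1,2] p],
        map_add' := by intro p q; funext i; fin_cases i <;> simp
        map_smul' := by intro c p; funext i; fin_cases i <;> simp } with hφ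
    apply LinearIndependent.of_comp φ
    rw [Fintype.linearIndependent_iff]
    intro g hg
    rw [Fin.sum_univ_three] at hg
    have h2n : (2:ℂ)^n ≠ 0 := pow_ne_zero _ two_ne_zero
    have h2n1 : (2:ℂ)^n - 1 ≠ 0 := by
      rw [sub_ne_zero]
      intro h
      have h' : ((2^n : ℕ) : ℂ) = ((1:ℕ) : ℂ) := by push_cast; simpa using h
      have h'' : (2^n : ℕ) = 1 := Nat.cast_inj.mp h'
      have h2 : 2^1 ≤ 2^n := Nat.pow_le_pow_right (by norm_num) hn1
      omega
    have h0 := congrFun hg 0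
    have h1 := congrFun hg 1
    have h2 := congrFun hg 2
    simp only [hφ, Function.comp_apply, Matrix.cons_val_zero, Matrix.cons_val_one,
      Matrix.head_cons, Pi.add_apply, Pi.smul_apply, LinearMap.coe_mk, AddHom.coe_mk,
      Matrix.cons_val_two, Matrix.tail_cons, Pi.zero_apply, smul_eq_mul,
      map_sub, map_mul, map_pow, eval_X, Matrix.cons_val] at h0 h1 h2
    norm_num at h0 h1 h2
    have hg0 : g 0 = 0 := h0
    have hg2 : g 2 = 0 := h1
    have hg1 : g 1 = 0 := by
      rw [hg0, hg2] at h2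
      have key : g 1 * ((2:ℂ)^n - 1) = 0 := by linear_combination h2
      rcases mul_eq_zero.mp key with h | h
      · exact h
      · exact absurd h h2n1
    intro i
    fin_cases i <;> assumption
  · -- surjectivity
    rw [hw1, hw2, hw3]
    intro u₁ hu₁ u₂ hu₂ u₃ hu₃
    obtain ⟨a, ha, a1, a2, a3⟩ := achieve n (fun j hj => claimA n j hj) u₁ hu₁
    obtain ⟨b, hb, b1, b2, b3⟩ := achieve2 n (fun j hj => claimB n j hj) u₂ hu₂
    obtain ⟨c, hc, c1, c2, c3⟩ := achieve3 n (fun j hj => claimC n j hj) u₃ hu₃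
    refine ⟨a + b + c, Submodule.add_mem _ (Submodule.add_mem _ ha hb) hc, ?_, ?_, ?_⟩
    · rw [biT_add_left, biT_add_left, a1, b1, c1, add_zero, add_zero]
    · rw [biT_add_left, biT_add_left, a2, b2, c2, add_zero, zero_add]
    · rw [biT_add_left, biT_add_left, a3, b3, c3, zero_add, zero_add]
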